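/- Let R be a commutative ring. (1) If R has stable range at most 1, then R has stable range 1.5. (2) If R has stable range 1.5, then R has almost stable range 1. (3) If R has almost stable range 1, then R has stable range at most 2. -/

import Mathlib

section
variable {Q : Type*} [CommRing Q]

lemma triple_coeffs {a b c : Q} (h : Ideal.span {a, b, c} = ⊤) :
    ∃ x y z : Q, x * a + y * b + z * c = 1 := by
  have h1 : (1 : Q) ∈ Ideal.span {a, b, c} := h ▸ Submodule.mem_top
  rw [show ({a, b, c} : Set Q) = insert a {b, c} from rfl, Ideal.mem_span_insert] at h1
  obtain ⟨x, w, hw, hx⟩ := h1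
  rw [Ideal.mem_span_pair] at hw
  obtain ⟨y, z, hyz⟩ := hw
  exact ⟨x, y, z, by rw [← hyz] at hx; linear_combination -hx⟩

lemma pair_top {u v x y : Q} (h : x * u + y * v = 1) : Ideal.span {u, v} = ⊤ := by
  rw [Ideal.eq_top_iff_one, Ideal.mem_span_pair]
  exact ⟨x, y, h⟩

lemma triple_top {a b c x y z : Q} (h : x * a + y * b + z * c = 1) :
    Ideal.span {a, b, c} = ⊤ := by
  rw [Ideal.eq_top_iff_one]
  rw [show ({a, b, c} : Set Q) = insert a {b, c} from rfl, Ideal.mem_span_insert]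
  exact ⟨x, y * b + z * c, Ideal.mem_span_pair.2 ⟨y, z, rfl⟩, by linear_combination -h⟩

end

/-- `R` has stable range at most 1. -/
def StableRange1 (R : Type*) [CommRing R] : Prop :=
  ∀ a b : R, Ideal.span {a, b} = ⊤ → ∃ r : R, IsUnit (a + b * r)

/-- `R` has stable range 1.5: for every unimodular triple `(a, b, c)` with `c ≠ 0`
there exists `r` such that `(a + b * r, c)` is unimodular. -/
def StableRange15 (R : Type*) [CommRing R] : Prop :=
  ∀ a b c : R, Ideal.span {a, b, c} = ⊤ → c ≠ 0 →
    ∃ r : R, Ideal.span {a + b * r, c} = ⊤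

/-- `R` has almost stable range 1: for every ideal not contained in the Jacobson radical,
the quotient has stable range at most 1. -/
def AlmostStableRange1 (R : Type*) [CommRing R] : Prop :=
  ∀ I : Ideal R, ¬ I ≤ Ideal.jacobson (⊥ : Ideal R) →
    ∀ a b : R ⧸ I, Ideal.span {a, b} = ⊤ → ∃ r : R ⧸ I, IsUnit (a + b * r)

/-- `R` has stable range at most 2. -/
def StableRange2 (R : Type*) [CommRing R] : Prop :=
  ∀ a₁ a₂ b : R, Ideal.span {a₁, a₂, b} = ⊤ →
    ∃ r₁ r₂ : R, Ideal.span {a₁ + b * r₁, a₂ + b * r₂} = ⊤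

theorem stmt13 (R : Type*) [CommRing R] :
    (StableRange1 R → StableRange15 R) ∧
    (StableRange15 R → AlmostStableRange1 R) ∧
    (AlmostStableRange1 R → StableRange2 R) := by
  refine ⟨?_, ?_, ?_⟩
  · -- SR1 → SR1.5
    intro h1 a b c htop hc
    obtain ⟨x, y, z, hxyz⟩ := triple_coeffs htop
    have hpair : Ideal.span {a, y * b + z * c} = ⊤ :=
      pair_top (x := x) (y := 1) (by linear_combination hxyz)
    obtain ⟨r, hr⟩ := h1 a (y * b + z * c) hpair
    refine ⟨y * r, Ideal.eq_top_of_isUnit_mem _ ?_ hr⟩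
    exact Ideal.mem_span_pair.2 ⟨1, z * r, by ring⟩
  · -- SR1.5 → AlmostSR1
    intro h15 I hI a b hab
    obtain ⟨c, hcI, hcJ⟩ := SetLike.not_le_iff_exists.1 hI
    have hc0 : c ≠ 0 := fun h => hcJ (h ▸ (Ideal.jacobson ⊥).zero_mem)
    obtain ⟨a', rfl⟩ := Ideal.Quotient.mk_surjective a
    obtain ⟨b', rfl⟩ := Ideal.Quotient.mk_surjective b
    have h1 : (1 : R ⧸ I) ∈ Ideal.span {Ideal.Quotient.mk I a', Ideal.Quotient.mk I b'} :=
      hab ▸ Submodule.mem_top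
    rw [Ideal.mem_span_pair] at h1
    obtain ⟨xq, yq, hxy⟩ := h1
    obtain ⟨x, rfl⟩ := Ideal.Quotient.mk_surjective xq
    obtain ⟨y, rfl⟩ := Ideal.Quotient.mk_surjective yq
    have hiI : x * a' + y * b' - 1 ∈ I := by
      rw [← Ideal.Quotient.eq]
      simpa using hxy
    obtain ⟨d, hdI, hd0, hdtop⟩ :
        ∃ d : R, d ∈ I ∧ d ≠ 0 ∧ Ideal.span {a', b', d} = ⊤ := by
      by_cases hi : x * a' + y * b' - 1 = 0
      · exact ⟨c, hcI, hc0, triple_top (x := x) (y := y) (z := 0)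
          (by linear_combination hi)⟩
      · exact ⟨x * a' + y * b' - 1, hiI, hi, triple_top (x := x) (y := y) (z := -1)
          (by ring)⟩
    obtain ⟨r, hr⟩ := h15 a' b' d hdtop hd0
    have h2 : (1 : R) ∈ Ideal.span {a' + b' * r, d} := hr ▸ Submodule.mem_top
    rw [Ideal.mem_span_pair] at h2
    obtain ⟨s, t, hst⟩ := h2
    refine ⟨Ideal.Quotient.mk I r, IsUnit.of_mul_eq_one (Ideal.Quotient.mk I s) ?_⟩
    have hd : Ideal.Quotient.mk I d = 0 := Ideal.Quotient.eq_zero_iff_mem.2 hdI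
    have := congrArg (Ideal.Quotient.mk I) hst
    push_cast [map_add, map_mul, map_one, hd] at this
    linear_combination this
  · -- AlmostSR1 → SR2
    intro h a₁ a₂ b htop
    obtain ⟨x, y, z, hxyz⟩ := triple_coeffs htop
    by_cases hJ : Ideal.span {a₂} ≤ Ideal.jacobson (⊥ : Ideal R)
    · have ha₂ : a₂ ∈ Ideal.jacobson (⊥ : Ideal R) :=
        hJ (Ideal.mem_span_singleton_self a₂)
      have hu : IsUnit (x * a₁ + z * b) := by
        have h2 := Ideal.mem_jacobson_bot.1 ha₂ (-y)
        have : a₂ * (-y) + 1 = x * a₁ + z * b := by linear_combination -hxyz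
        rwa [this] at h2
      have hsp : Ideal.span {a₁, b} = ⊤ :=
        Ideal.eq_top_of_isUnit_mem _ (Ideal.mem_span_pair.2 ⟨x, z, rfl⟩) hu
      have h1 : (1 : R) ∈ Ideal.span {a₁, b} := hsp ▸ Submodule.mem_top
      rw [Ideal.mem_span_pair] at h1
      obtain ⟨p, q, hpq⟩ := h1
      exact ⟨0, q * (1 - a₂), pair_top (x := p * (1 - a₂)) (y := 1)
        (by linear_combination (1 - a₂) * hpq)⟩
    · set π := Ideal.Quotient.mk (Ideal.span {a₂}) with hπ
      have ha2 : π a₂ = 0 := Ideal.Quotient.eq_zero_iff_mem.2 (Ideal.mem_span_singleton_self a₂)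
      have key : π x * π a₁ + π z * π b = 1 := by
        rw [← map_mul, ← map_mul, ← map_add, ← map_one π]
        refine Ideal.Quotient.eq.2 ?_
        have : x * a₁ + z * b - 1 = (-y) * a₂ := by linear_combination hxyz
        rw [this]
        exact Ideal.mul_mem_left _ _ (Ideal.mem_span_singleton_self a₂)
      obtain ⟨rq, hr⟩ := h (Ideal.span {a₂}) hJ (π a₁) (π b) (pair_top key)
      obtain ⟨r, rfl⟩ := Ideal.Quotient.mk_surjective rq
      obtain ⟨v, hv⟩ := hr.exists_right_inv
      obtain ⟨u, rfl⟩ := Ideal.Quotient.mk_surjective v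
      have hmem : (a₁ + b * r) * u - 1 ∈ Ideal.span {a₂} := by
        refine Ideal.Quotient.eq.1 ?_
        rw [map_mul, map_add, map_mul, map_one]
        exact hv
      obtain ⟨w, hw⟩ := Ideal.mem_span_singleton'.1 hmem
      exact ⟨r, 0, pair_top (x := u) (y := -w) (by linear_combination -hw)⟩
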